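/- Let J be an infinite set and let 1 < p < ∞. Let W be a nonempty open convex cone in the real Banach space ℓ^p(J,ℝ) such that for every permutation σ of J moving only finitely many elements, the induced isometry f ↦ f ∘ σ maps W into W. Then W = ℓ^p(J,ℝ). -/

import Mathlib

open scoped ENNReal

section Aux

variable {J : Type*} {p : ℝ≥0∞}

open Classical in
/-- The function swapping two disjoint finsets along an equivalence. -/
noncomputable def swapSetsFun (A B : Finset J) (e : ↥A ≃ ↥B) (x : J) : J :=
  if h : x ∈ A then ↑(e ⟨x, h⟩) else if h : x ∈ B then ↑(e.symm ⟨x, h⟩) else x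

theorem swapSetsFun_involutive (A B : Finset J) (hd : Disjoint A B) (e : ↥A ≃ ↥B) :
    Function.Involutive (swapSetsFun A B e) := by
  intro x
  unfold swapSetsFun
  by_cases hA : x ∈ A
  · rw [dif_pos hA]
    have h1 : (↑(e ⟨x, hA⟩) : J) ∈ B := (e ⟨x, hA⟩).2
    have h2 : (↑(e ⟨x, hA⟩) : J) ∉ A := fun h => (Finset.disjoint_left.mp hd h) h1
    rw [dif_neg h2, dif_pos h1]
    simp
  · rw [dif_neg hA]
    by_cases hB : x ∈ B
    · rw [dif_pos hB]
      have h1 : (↑(e.symm ⟨x, hB⟩) : J) ∈ A := (e.symm ⟨x, hB⟩).2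
      rw [dif_pos h1]
      simp
    · rw [dif_neg hB, dif_neg hA, dif_neg hB]

/-- The permutation swapping two disjoint finsets along an equivalence. -/
noncomputable def swapSets (A B : Finset J) (hd : Disjoint A B) (e : ↥A ≃ ↥B) : Equiv.Perm J :=
  Function.Involutive.toPerm _ (swapSetsFun_involutive A B hd e)

theorem swapSets_apply (A B : Finset J) (hd : Disjoint A B) (e : ↥A ≃ ↥B) (x : J) :
    swapSets A B hd e x = swapSetsFun A B e x := rfl

theorem swapSets_apply_mem (A B : Finset J) (hd : Disjoint A B) (e : ↥A ≃ ↥B) {x : J}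
    (hx : x ∈ A) : swapSets A B hd e x = ↑(e ⟨x, hx⟩) := dif_pos hx

theorem swapSets_apply_not_mem (A B : Finset J) (hd : Disjoint A B) (e : ↥A ≃ ↥B) {x : J}
    (hxA : x ∉ A) (hxB : x ∉ B) : swapSets A B hd e x = x := by
  rw [swapSets_apply, swapSetsFun, dif_neg hxA, dif_neg hxB]

theorem swapSets_support (A B : Finset J) (hd : Disjoint A B) (e : ↥A ≃ ↥B) :
    {j : J | swapSets A B hd e j ≠ j}.Finite := by
  apply Set.Finite.subset (Set.Finite.union A.finite_toSet B.finite_toSet)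
  intro j hj
  by_contra hmem
  simp only [Set.mem_union, Finset.mem_coe, not_or] at hmem
  exact hj (swapSets_apply_not_mem A B hd e hmem.1 hmem.2)

theorem swapSets_involutive (A B : Finset J) (hd : Disjoint A B) (e : ↥A ≃ ↥B) (x : J) :
    swapSets A B hd e (swapSets A B hd e x) = x :=
  swapSetsFun_involutive A B hd e x

/-- Composition of an `lp` function with a permutation of the index set. -/
noncomputable def compPerm [Fact (1 ≤ p)] (hp : p ≠ ⊤) (σ : Equiv.Perm J)
    (f : lp (fun _ : J => ℝ) p) : lp (fun _ : J => ℝ) p :=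
  ⟨fun j => f (σ j), by
    have hq : 0 < p.toReal :=
      ENNReal.toReal_pos (zero_lt_one.trans_le (Fact.out : (1:ℝ≥0∞) ≤ p)).ne' hp
    apply memℓp_gen
    exact (Equiv.summable_iff σ (f := fun j => ‖f j‖ ^ p.toReal)).2
      ((lp.memℓp f).summable hq)⟩

theorem compPerm_apply [Fact (1 ≤ p)] (hp : p ≠ ⊤) (σ : Equiv.Perm J)
    (f : lp (fun _ : J => ℝ) p) (j : J) :
    compPerm hp σ f j = f (σ j) := rfl

theorem compPerm_norm [Fact (1 ≤ p)] (hp : p ≠ ⊤) (σ : Equiv.Perm J)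
    (f : lp (fun _ : J => ℝ) p) : ‖compPerm hp σ f‖ = ‖f‖ := by
  have hq : 0 < p.toReal :=
    ENNReal.toReal_pos (zero_lt_one.trans_le (Fact.out : (1:ℝ≥0∞) ≤ p)).ne' hp
  have h3 : ∑' j, ‖compPerm hp σ f j‖ ^ p.toReal = ∑' j, ‖f j‖ ^ p.toReal :=
    σ.tsum_eq (fun j => ‖f j‖ ^ p.toReal)
  have hkey : ‖compPerm hp σ f‖ ^ p.toReal = ‖f‖ ^ p.toReal := by
    rw [lp.norm_rpow_eq_tsum hq, lp.norm_rpow_eq_tsum hq, h3]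
  calc ‖compPerm hp σ f‖ = (‖compPerm hp σ f‖ ^ p.toReal) ^ (p.toReal)⁻¹ :=
        (Real.rpow_rpow_inv (norm_nonneg _) hq.ne').symm
    _ = (‖f‖ ^ p.toReal) ^ (p.toReal)⁻¹ := by rw [hkey]
    _ = ‖f‖ := Real.rpow_rpow_inv (norm_nonneg _) hq.ne'

theorem disjoint_support_norm_rpow [Fact (1 ≤ p)] (hq : 0 < p.toReal)
    (a b : lp (fun _ : J => ℝ) p) (h : ∀ j, a j = 0 ∨ b j = 0) :
    ‖a + b‖ ^ p.toReal = ‖a‖ ^ p.toReal + ‖b‖ ^ p.toReal := by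
  rw [lp.norm_rpow_eq_tsum hq, lp.norm_rpow_eq_tsum hq, lp.norm_rpow_eq_tsum hq,
    ← Summable.tsum_add ((lp.memℓp a).summable hq) ((lp.memℓp b).summable hq)]
  congr 1
  funext j
  have hab : (a + b) j = a j + b j := by rw [lp.coeFn_add]; rfl
  rw [hab]
  rcases h j with h0 | h0 <;>
    simp [h0, Real.zero_rpow hq.ne']

theorem exists_truncation [Fact (1 ≤ p)] (hp : p ≠ ⊤) (f : lp (fun _ : J => ℝ) p)
    {ε : ℝ} (hε : 0 < ε) :
    ∃ (f' : lp (fun _ : J => ℝ) p) (A : Finset J),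
      (∀ j ∉ A, f' j = 0) ∧ ‖f - f'‖ < ε := by
  classical
  have hsum := lp.hasSum_single hp f
  rw [HasSum] at hsum
  obtain ⟨A, hA⟩ := (Metric.tendsto_atTop.mp hsum) ε hε
  refine ⟨∑ i ∈ A, lp.single p i (f i), A, ?_, ?_⟩
  · intro j hj
    rw [lp.coeFn_sum]
    simp only [Finset.sum_apply, lp.single_apply]
    apply Finset.sum_eq_zero
    intro i hi
    rw [Pi.single_apply, if_neg]
    intro hji
    exact hj (hji ▸ hi)
  · have := hA A le_rfl
    rwa [dist_comm, dist_eq_norm] at this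

end Aux

/-- For an infinite set `J` and `1 < p < ∞`, every nonempty open convex cone in
`ℓ^p(J,ℝ)` invariant under all finitely supported permutations of `J` is the whole
space. -/
theorem invariant_open_cone_in_lp_is_univ
    {J : Type*} [Infinite J] (p : ℝ≥0∞) (hp1 : 1 < p) (hp2 : p < ⊤) :
    letI : Fact ((1 : ℝ≥0∞) ≤ p) := ⟨hp1.le⟩
    ∀ W : Set (lp (fun _ : J => ℝ) p),
      W.Nonempty → IsOpen W → Convex ℝ W →
      (∀ t : ℝ, 0 < t → ∀ f ∈ W, t • f ∈ W) →
      (∀ σ : Equiv.Perm J, {j : J | σ j ≠ j}.Finite →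
        ∀ f ∈ W, ∀ g : lp (fun _ : J => ℝ) p, (∀ j : J, g j = f (σ j)) → g ∈ W) →
      W = Set.univ := by
  letI : Fact ((1 : ℝ≥0∞) ≤ p) := ⟨hp1.le⟩
  intro W hne hopen hconv hcone hperm
  classical
  have hptop : p ≠ ⊤ := hp2.ne
  have hq1 : 1 < p.toReal := by
    rw [← ENNReal.toReal_one]
    exact (ENNReal.toReal_lt_toReal ENNReal.one_ne_top hptop).mpr hp1
  have hq : 0 < p.toReal := lt_trans one_pos hq1
  obtain ⟨f₀, hf₀⟩ := hne
  obtain ⟨ε, hε, hball⟩ := Metric.isOpen_iff.mp hopen f₀ hf₀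
  have hW : ∀ x : lp (fun _ : J => ℝ) p, ‖x - f₀‖ < ε → x ∈ W := fun x hx =>
    hball (by rwa [Metric.mem_ball, dist_eq_norm])
  obtain ⟨f', A₀, hA₀, hf'near⟩ := exists_truncation hptop f₀ (half_pos hε)
  have hf'ball : ∀ h : lp (fun _ : J => ℝ) p, ‖h‖ < ε / 2 → f' + h ∈ W := by
    intro h hh
    apply hW
    have h1 : f' + h - f₀ = (f' - f₀) + h := by abel
    rw [h1]
    calc ‖(f' - f₀) + h‖ ≤ ‖f' - f₀‖ + ‖h‖ := norm_add_le _ _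
      _ < ε / 2 + ε / 2 := by
          apply add_lt_add _ hh
          rwa [norm_sub_rev]
      _ = ε := add_halves ε
  set c : ℝ := 2 ^ ((p.toReal)⁻¹ - 1) with hc_def
  have hexp_neg : (p.toReal)⁻¹ - 1 < 0 := by
    have h1 : (p.toReal)⁻¹ < 1 := by
      rw [inv_lt_one_iff₀]
      right; exact hq1
    linarith
  have hc0 : 0 < c := Real.rpow_pos_of_pos two_pos _
  have hc1 : c < 1 := Real.rpow_lt_one_of_one_lt_of_neg one_lt_two hexp_neg
  -- key induction: small elements of `W` with a uniform ball
  have key : ∀ n : ℕ, ∃ w : lp (fun _ : J => ℝ) p,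
      (∃ A : Finset J, ∀ j ∉ A, w j = 0) ∧ ‖w‖ ≤ c ^ n * ‖f'‖ ∧
      ∀ h : lp (fun _ : J => ℝ) p, ‖h‖ < ε / 2 → w + h ∈ W := by
    intro n
    induction n with
    | zero => exact ⟨f', ⟨A₀, hA₀⟩, by simp, hf'ball⟩
    | succ n ih =>
      obtain ⟨w, ⟨A, hA⟩, hwn, hwball⟩ := ih
      obtain ⟨B, hBsub, hBcard⟩ :=
        (A.finite_toSet.infinite_compl).exists_subset_card_eq A.card
      have hd : Disjoint A B := by
        rw [Finset.disjoint_right]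
        intro x hxB
        exact hBsub hxB
      have e : ↥A ≃ ↥B := Fintype.equivOfCardEq (by simp [hBcard])
      set σ : Equiv.Perm J := swapSets A B hd e with hσ
      set v : lp (fun _ : J => ℝ) p := compPerm hptop σ w with hv
      have hσA : ∀ j ∈ A, σ j ∉ A := by
        intro j hj
        rw [swapSets_apply_mem A B hd e hj]
        exact fun h => (Finset.disjoint_left.mp hd h) (e ⟨j, hj⟩).2
      refine ⟨(2⁻¹ : ℝ) • (w + v), ⟨A ∪ B, ?_⟩, ?_, ?_⟩
      · intro j hj
        have hjA : j ∉ A := fun h => hj (Finset.mem_union_left _ h)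
        have hjB : j ∉ B := fun h => hj (Finset.mem_union_right _ h)
        have hσj : σ j = j := swapSets_apply_not_mem A B hd e hjA hjB
        have hvj : v j = 0 := by
          rw [hv, compPerm_apply, hσj]
          exact hA j hjA
        rw [lp.coeFn_smul, Pi.smul_apply, lp.coeFn_add, Pi.add_apply, hA j hjA, hvj]
        simp
      · -- norm estimate
        have hdisj : ∀ j, w j = 0 ∨ v j = 0 := by
          intro j
          by_cases hj : j ∈ A
          · right
            rw [hv, compPerm_apply]
            exact hA _ (hσA j hj)
          · left
            exact hA j hj
        have h1 : ‖w + v‖ ^ p.toReal = 2 * ‖w‖ ^ p.toReal := by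
          rw [disjoint_support_norm_rpow hq w v hdisj, hv, compPerm_norm]
          ring
        have h2 : ‖w + v‖ = 2 ^ (p.toReal)⁻¹ * ‖w‖ := by
          have h3 := congrArg (fun x : ℝ => x ^ (p.toReal)⁻¹) h1
          rw [Real.rpow_rpow_inv (norm_nonneg _) hq.ne'] at h3
          rw [h3, Real.mul_rpow (by norm_num) (Real.rpow_nonneg (norm_nonneg _) _),
            Real.rpow_rpow_inv (norm_nonneg _) hq.ne']
        have h4 : ‖(2⁻¹ : ℝ) • (w + v)‖ = c * ‖w‖ := by
          rw [norm_smul, h2, hc_def]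
          rw [Real.rpow_sub two_pos, Real.rpow_one]
          simp [Real.norm_eq_abs]
          ring
        rw [h4, pow_succ, mul_comm (c ^ n) c, mul_assoc]
        exact mul_le_mul_of_nonneg_left hwn hc0.le
      · -- ball property
        intro h hh
        have hσfin : {j : J | σ j ≠ j}.Finite := swapSets_support A B hd e
        have m1 : w + h ∈ W := hwball h hh
        have m2 : w + compPerm hptop σ h ∈ W := by
          apply hwball
          rwa [compPerm_norm]
        have m3 : compPerm hptop σ (w + compPerm hptop σ h) ∈ W := by
          apply hperm σ hσfin _ m2
          intro j
          rfl
        have m4 := hconv m1 m3 (by norm_num : (0:ℝ) ≤ 2⁻¹) (by norm_num : (0:ℝ) ≤ 2⁻¹)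
          (by norm_num)
        have heq : (2⁻¹ : ℝ) • (w + v) + h =
            (2⁻¹ : ℝ) • (w + h) + (2⁻¹ : ℝ) • compPerm hptop σ (w + compPerm hptop σ h) := by
          apply Subtype.ext
          funext j
          have hcoe : ∀ (x y : lp (fun _ : J => ℝ) p) (j : J), (x + y) j = x j + y j := by
            intro x y j; rw [lp.coeFn_add]; rfl
          have hsmul : ∀ (t : ℝ) (x : lp (fun _ : J => ℝ) p) (j : J),
              (t • x) j = t * x j := by
            intro t x j; rw [lp.coeFn_smul]; rfl
          have hinv : σ (σ j) = j := swapSets_involutive A B hd e j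
          simp only [hcoe, hsmul, hv, compPerm_apply, hinv]
          ring
        rw [heq]
        exact m4
  -- conclusion
  ext u
  simp only [Set.mem_univ, iff_true]
  have hnorm : ∃ n : ℕ, c ^ n * ‖f'‖ < ε / 4 := by
    rcases eq_or_lt_of_le (norm_nonneg f') with hf0 | hf0
    · exact ⟨0, by rw [← hf0, mul_zero]; linarith⟩
    · obtain ⟨n, hn⟩ := exists_pow_lt_of_lt_one
        (div_pos (by linarith : (0:ℝ) < ε / 4) hf0) hc1
      refine ⟨n, ?_⟩
      calc c ^ n * ‖f'‖ < (ε / 4 / ‖f'‖) * ‖f'‖ := mul_lt_mul_of_pos_right hn hf0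
        _ = ε / 4 := div_mul_cancel₀ _ hf0.ne'
  obtain ⟨n, hn⟩ := hnorm
  obtain ⟨w, -, hwsmall, hwball⟩ := key n
  have hwlt : ‖w‖ < ε / 4 := lt_of_le_of_lt hwsmall hn
  set t : ℝ := (‖u‖ + 1) / (ε / 4) with ht_def
  have ht : 0 < t := div_pos (by positivity) (by linarith)
  have hu_small : ‖t⁻¹ • u‖ < ε / 4 := by
    have hval : ‖t⁻¹ • u‖ = (ε / 4) * ‖u‖ / (‖u‖ + 1) := by
      rw [norm_smul, Real.norm_eq_abs, abs_inv, abs_of_pos ht, ht_def, inv_div]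
      ring
    rw [hval, div_lt_iff₀ (by positivity)]
    nlinarith [norm_nonneg u, hε]
  have hmem : t⁻¹ • u ∈ W := by
    have h1 : ‖t⁻¹ • u - w‖ < ε / 2 := by
      calc ‖t⁻¹ • u - w‖ ≤ ‖t⁻¹ • u‖ + ‖w‖ := norm_sub_le _ _
        _ < ε / 4 + ε / 4 := add_lt_add hu_small hwlt
        _ = ε / 2 := by ring
    have h2 := hwball (t⁻¹ • u - w) h1
    rwa [add_sub_cancel] at h2
  have h3 := hcone t ht _ hmem
  rwa [smul_smul, mul_inv_cancel₀ ht.ne', one_smul] at h3
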